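/- arXiv:2412.03750 — 5 statements merged into one kernel-verified Lean document; each statement's English description precedes it below -/
import Mathlib

section
/- Let (𝐬, r(𝐬)) ∈ 𝒮 be connected and stable, with r(𝐬) = (1, r_1, …, r_k). Let 1 ≤ m ≤ k−1 be such that 𝐬(r_{m−1}−1, r_m) ∈ S_← and assume r_m + 2 ≤ r. If i_{r_m−1} = i_{r_m+1} and r_{m−1} < r_m − 1, then j_{r_{m+1}} < i_{r_m−2} and r_{m+1} > r_m + 1. -/
namespace AltSnakePaper

/-- `[i,j] ∈ 𝕀ₙ`: the interval condition `0 ≤ j - i ≤ n + 1`. -/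
def InIn (n : ℕ) (i j : ℤ) : Prop := 0 ≤ j - i ∧ j - i ≤ (n : ℤ) + 1

/-- The intervals `[i1,j1]` and `[i2,j2]` overlap. -/
def Overlap (i1 j1 i2 j2 : ℤ) : Prop :=
  (i1 < i2 ∧ i2 ≤ j1 ∧ j1 < j2) ∨ (i2 < i1 ∧ i1 ≤ j2 ∧ j2 < j1)

/-- The pair `([i1,j1],[i2,j2])` is connected. -/
def ConnPair (n : ℕ) (i1 j1 i2 j2 : ℤ) : Prop :=
  Overlap i1 j1 i2 j2 ∧ InIn n i1 j2 ∧ InIn n i2 j1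

/-- The subtuple `𝐬(a,b)` (entries with indices `a+1, …, b`) lies in `S_→`. -/
def SRight (ii jj : ℕ → ℤ) (a b : ℕ) : Prop :=
  ∀ s, a + 1 ≤ s → s + 1 ≤ b → ii s < ii (s + 1) ∧ jj s < jj (s + 1)

/-- The subtuple `𝐬(a,b)` (entries with indices `a+1, …, b`) lies in `S_←`. -/
def SLeft (ii jj : ℕ → ℤ) (a b : ℕ) : Prop :=
  ∀ s, a + 1 ≤ s → s + 1 ≤ b → ii (s + 1) < ii s ∧ jj (s + 1) < jj s

/-- `(𝐬, r(𝐬))` is an alternating snake, where `𝐬 = ([i_1,j_1],…,[i_r,j_r])`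
(encoded by `ii jj : ℕ → ℤ`, entries indexed `1,…,r`) and
`r(𝐬) = (r_0, r_1, …, r_k)` (encoded by `rr : ℕ → ℕ`). -/
structure IsAltSnake (n r k : ℕ) (rr : ℕ → ℕ) (ii jj : ℕ → ℤ) : Prop where
  hr : 1 ≤ r
  hk : k ≤ r
  mem : ∀ s, 1 ≤ s → s ≤ r → InIn n (ii s) (jj s)
  distinct : ∀ s p, 1 ≤ s → s ≤ r → 1 ≤ p → p ≤ r → s ≠ p → ii s ≠ ii p ∨ jj s ≠ jj p
  rr0 : rr 0 = 1
  rrk : rr k = r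
  rrmono : ∀ m, m < k → rr m < rr (m + 1)
  mono : ∀ m, 1 ≤ m → m ≤ k →
      SRight ii jj (rr (m - 1) - 1) (rr m) ∨ SLeft ii jj (rr (m - 1) - 1) (rr m)
  alt : ∀ m, 1 ≤ m → m < k →
      (SRight ii jj (rr (m - 1) - 1) (rr m) ↔ SLeft ii jj (rr m - 1) (rr (m + 1)))
  nonoverlap : ∀ m s t, 1 ≤ m → m < k → 1 ≤ s → s < rr m → rr m < t → t ≤ r →
      ¬ Overlap (ii s) (jj s) (ii t) (jj t)

/-- The subtuple `𝐬(a,b)` is connected: all consecutive pairs are connected. -/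
def SegConnected (n : ℕ) (ii jj : ℕ → ℤ) (a b : ℕ) : Prop :=
  ∀ s, a + 1 ≤ s → s + 1 ≤ b → ConnPair n (ii s) (jj s) (ii (s + 1)) (jj (s + 1))

/-- The subtuple `𝐬(a,b)` (with its induced r-vector, whose internal break points
are the `rr m` with `a + 1 < rr m < b`) is prime. -/
def SegPrime (n k : ℕ) (rr : ℕ → ℕ) (ii jj : ℕ → ℤ) (a b : ℕ) : Prop :=
  SegConnected n ii jj a b ∧
    ∀ m, 1 ≤ m → m < k → a + 1 < rr m → rr m < b →
      ii (rr m - 1) ≠ ii (rr m + 1) ∧ jj (rr m - 1) ≠ jj (rr m + 1)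

/-- The subtuple `𝐬(a,b)` (with its induced r-vector) is stable. -/
def SegStable (k : ℕ) (rr : ℕ → ℕ) (ii jj : ℕ → ℤ) (a b : ℕ) : Prop :=
  ∀ m, 1 ≤ m → m < k → a + 1 < rr m → rr m < b →
    (ii (rr m + 1) < ii (rr m - 1) → jj (rr m + 1) < ii (rr m - 1)) ∧
    (jj (rr m - 1) < jj (rr m + 1) → jj (rr m - 1) < ii (rr m + 1))

/-- The alternating snake is stable. -/
def Stable (k : ℕ) (rr : ℕ → ℕ) (ii jj : ℕ → ℤ) : Prop :=
  ∀ m, 1 ≤ m → m < k →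
    (ii (rr m + 1) < ii (rr m - 1) → jj (rr m + 1) < ii (rr m - 1)) ∧
    (jj (rr m - 1) < jj (rr m + 1) → jj (rr m - 1) < ii (rr m + 1))

/-- The boundary condition allowing a cut of the snake at `p = rr m - ε`:
`a_{r_m-1} = a_{r_m+1}` for some `a ∈ {i, j}`, with `ε ∈ {0,1}` chosen so that, `b`
denoting the other member of `{i,j}`, one has `b_{r_m−1+2ε} < b_{r_m+1−2ε}` if
`𝐬(r_m−2, r_m) ∈ S_←` and `b_{r_m+1−2ε} < b_{r_m−1+2ε}` if `𝐬(r_m−2, r_m) ∈ S_→`. -/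
def BoundaryCond (k : ℕ) (rr : ℕ → ℕ) (ii jj : ℕ → ℤ) (m ε : ℕ) : Prop :=
  (ii (rr m - 1) = ii (rr m + 1) ∧
    (SLeft ii jj (rr m - 2) (rr m) → jj (rr m - 1 + 2 * ε) < jj (rr m + 1 - 2 * ε)) ∧
    (SRight ii jj (rr m - 2) (rr m) → jj (rr m + 1 - 2 * ε) < jj (rr m - 1 + 2 * ε))) ∨
  (jj (rr m - 1) = jj (rr m + 1) ∧
    (SLeft ii jj (rr m - 2) (rr m) → ii (rr m - 1 + 2 * ε) < ii (rr m + 1 - 2 * ε)) ∧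
    (SRight ii jj (rr m - 2) (rr m) → ii (rr m + 1 - 2 * ε) < ii (rr m - 1 + 2 * ε)))

/-- `p` is an admissible cut point for the prime decomposition. -/
def CutAt (n r k : ℕ) (rr : ℕ → ℕ) (ii jj : ℕ → ℤ) (p : ℕ) : Prop :=
  p = r ∨
  ¬ ConnPair n (ii p) (jj p) (ii (p + 1)) (jj (p + 1)) ∨
  ∃ m ε, 1 ≤ m ∧ m < k ∧ ε ≤ 1 ∧ p = rr m - ε ∧ BoundaryCond k rr ii jj m ε

/-- `0 = c 0 < c 1 < ⋯ < c L = r` are the cut points of a prime decomposition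
of the snake, the prime factors being the segments `𝐬(c t, c (t+1))`. -/
def IsPrimeDecomp (n r k : ℕ) (rr : ℕ → ℕ) (ii jj : ℕ → ℤ) (c : ℕ → ℕ) (L : ℕ) : Prop :=
  1 ≤ L ∧ c 0 = 0 ∧ c L = r ∧ (∀ t, t < L → c t < c (t + 1)) ∧
  (∀ t, t < L → SegPrime n k rr ii jj (c t) (c (t + 1))) ∧
  (∀ t, 1 ≤ t → t ≤ L → CutAt n r k rr ii jj (c t))

/-- The segment `𝐬(a,b)` is contained in a prime factor of `𝐬`. -/
def ContainedInPF (n r k : ℕ) (rr : ℕ → ℕ) (ii jj : ℕ → ℤ) (a b : ℕ) : Prop :=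
  ∃ c L t, IsPrimeDecomp n r k rr ii jj c L ∧ t < L ∧ c t ≤ a ∧ b ≤ c (t + 1)


lemma sright_chain {ii jj : ℕ → ℤ} {a b : ℕ} (h : SRight ii jj a b) {s : ℕ}
    (hs : a + 1 ≤ s) : ∀ t, s ≤ t → t ≤ b → ii s ≤ ii t ∧ jj s ≤ jj t := by
  intro t
  induction t with
  | zero =>
    intro h1 _
    have : s = 0 := by omega
    subst this; exact ⟨le_rfl, le_rfl⟩
  | succ u ih =>
    intro h1 h2
    rcases Nat.lt_or_ge s (u + 1) with hlt | hge
    · have hu := ih (by omega) (by omega)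
      have hstep := h u (by omega) h2
      exact ⟨hu.1.trans hstep.1.le, hu.2.trans hstep.2.le⟩
    · have : s = u + 1 := by omega
      subst this; exact ⟨le_rfl, le_rfl⟩

lemma rr_le {k : ℕ} {rr : ℕ → ℕ} (hm : ∀ m, m < k → rr m < rr (m + 1)) :
    ∀ a b, a ≤ b → b ≤ k → rr a ≤ rr b := by
  intro a b
  induction b with
  | zero =>
    intro h1 _
    have : a = 0 := by omega
    subst this; exact le_rfl
  | succ u ih =>
    intro h1 h2
    rcases Nat.lt_or_ge a (u + 1) with hlt | hge
    · exact le_trans (ih (by omega) (by omega)) (hm u (by omega)).le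
    · have : a = u + 1 := by omega
      subst this; exact le_rfl

/-- Proposition (ieq (i)): for a connected stable alternating snake, if
`𝐬(r_{m−1}−1, r_m) ∈ S_←`, `r_m + 2 ≤ r`, `i_{r_m−1} = i_{r_m+1}` and
`r_{m−1} < r_m − 1`, then `j_{r_{m+1}} < i_{r_m−2}` and `r_{m+1} > r_m + 1`. -/
theorem stmt_11 (n r k : ℕ) (hn : 1 ≤ n) (rr : ℕ → ℕ) (ii jj : ℕ → ℤ)
    (h : IsAltSnake n r k rr ii jj)
    (hc : SegConnected n ii jj 0 r) (hst : Stable k rr ii jj)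
    (m : ℕ) (hm1 : 1 ≤ m) (hm2 : m < k)
    (hdir : SLeft ii jj (rr (m - 1) - 1) (rr m)) (hr2 : rr m + 2 ≤ r)
    (hieq : ii (rr m - 1) = ii (rr m + 1)) (hrm : rr (m - 1) < rr m - 1) :
    jj (rr (m + 1)) < ii (rr m - 2) ∧ rr m + 1 < rr (m + 1) := by
  have hmono := h.rrmono
  have hrr0 := h.rr0
  have hrrk := h.rrk
  have h1 : 1 ≤ rr (m - 1) := by
    have := rr_le hmono 0 (m - 1) (Nat.zero_le _) (by omega)
    omega
  have hR3 : 3 ≤ rr m := by omega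
  have hrmp : rr m < rr (m + 1) := h.rrmono m hm2
  have hkr : rr (m + 1) ≤ r := by
    have := rr_le hmono (m + 1) k (by omega) le_rfl
    omega
  -- segment m is not in S_→
  have hnotSR : ¬ SRight ii jj (rr (m - 1) - 1) (rr m) := by
    intro hs
    have h1' := hs (rr m - 1) (by omega) (by omega)
    have h2' := hdir (rr m - 1) (by omega) (by omega)
    linarith [h1'.1, h2'.1]
  -- segment m+1 is in S_→
  have hSR : SRight ii jj (rr m - 1) (rr (m + 1)) := by
    have halt := h.alt m hm1 hm2
    have hmo := h.mono (m + 1) (by omega) (by omega)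
    simp only [Nat.add_sub_cancel] at hmo
    rcases hmo with hmo | hmo
    · exact hmo
    · exact absurd (halt.mpr hmo) hnotSR
  -- stability at m: jj (rr m + 1) < jj (rr m - 1)
  have hmem1 := h.mem (rr m - 1) (by omega) (by omega)
  have hne := h.distinct (rr m - 1) (rr m + 1) (by omega) (by omega) (by omega)
    (by omega) (by omega)
  have hjlt : jj (rr m + 1) < jj (rr m - 1) := by
    have hne' : jj (rr m - 1) ≠ jj (rr m + 1) := by
      rcases hne with hne | hne
      · exact absurd hieq hne
      · exact hne
    by_contra hcon
    have hlt : jj (rr m - 1) < jj (rr m + 1) := lt_of_le_of_ne (by linarith) hne'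
    have := (hst m hm1 hm2).2 hlt
    rw [← hieq] at this
    have := hmem1.1
    linarith
  -- SLeft facts at the end of segment m
  have e2 : rr m - 2 + 1 = rr m - 1 := by omega
  have hd2 := hdir (rr m - 2) (by omega) (by omega)
  rw [e2] at hd2
  obtain ⟨hi12, hj12⟩ := hd2
  -- connectivity of (rr m - 2, rr m - 1)
  have hcp := hc (rr m - 2) (by omega) (by omega)
  rw [e2] at hcp
  have hi_le : ii (rr m - 2) ≤ jj (rr m - 1) := by
    rcases hcp.1 with ⟨ha, _, _⟩ | ⟨_, hb, _⟩
    · linarith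
    · exact hb
  -- base: jj (rr m + 1) < ii (rr m - 2)
  have hbase : jj (rr m + 1) < ii (rr m - 2) := by
    have hno := h.nonoverlap m (rr m - 2) (rr m + 1) hm1 hm2 (by omega) (by omega)
      (by omega) (by omega)
    by_contra hcon
    refine hno (Or.inr ⟨?_, ?_, ?_⟩)
    · rw [← hieq]; exact hi12
    · linarith
    · linarith
  -- induction along segment m+1
  have hclaim : ∀ t, rr m + 1 ≤ t → t ≤ rr (m + 1) → jj t < ii (rr m - 2) := by
    intro t
    induction t with
    | zero => omega
    | succ u ih =>
      intro h1' h2'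
      rcases Nat.lt_or_ge (rr m + 1) (u + 1) with hlt | hge
      · have hu := ih (by omega) (by omega)
        have hstep := hSR u (by omega) (by omega)
        have hcp2 := hc u (by omega) (by omega)
        have hle2 : ii (u + 1) ≤ jj u := by
          rcases hcp2.1 with ⟨_, hb, _⟩ | ⟨ha, _, _⟩
          · exact hb
          · linarith [hstep.1]
        have hch := sright_chain hSR (s := rr m + 1) (by omega) u (by omega) (by omega)
        by_cases hjc : jj (u + 1) < jj (rr m - 2)
        · have hno := h.nonoverlap m (rr m - 2) (u + 1) hm1 hm2 (by omega) (by omega)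
            (by omega) (by omega)
          by_contra hcon
          exact hno (Or.inr ⟨by linarith, by linarith, hjc⟩)
        · exfalso
          have hno := h.nonoverlap m (rr m - 1) (u + 1) hm1 hm2 (by omega) (by omega)
            (by omega) (by omega)
          refine hno (Or.inl ⟨?_, ?_, ?_⟩)
          · rw [hieq]; linarith [hch.1, hstep.1]
          · linarith
          · linarith
      · have : u = rr m := by omega
        subst this
        exact hbase
  refine ⟨hclaim (rr (m + 1)) (by omega) le_rfl, ?_⟩
  -- second part: rr m + 1 < rr (m + 1)
  by_contra hcon
  have heq : rr (m + 1) = rr m + 1 := by omega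
  have hk2 : m + 1 < k := by
    by_contra hk2
    have he : m + 1 = k := by omega
    rw [he, h.rrk] at heq
    omega
  have halt2 := h.alt (m + 1) (by omega) hk2
  simp only [Nat.add_sub_cancel] at halt2
  have hSL2 := halt2.mp hSR
  have hrm2 := h.rrmono (m + 1) hk2
  have hs2 := hSL2 (rr m + 1) (by omega) (by omega)
  have hcp3 := hc (rr m + 1) (by omega) (by omega)
  have hle3 : ii (rr m + 1) ≤ jj (rr m + 1 + 1) := by
    rcases hcp3.1 with ⟨ha, _, _⟩ | ⟨_, hb, _⟩
    · linarith [hs2.1]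
    · exact hb
  have hno := h.nonoverlap m (rr m - 1) (rr m + 1 + 1) hm1 hm2 (by omega) (by omega)
    (by omega) (by omega)
  refine hno (Or.inr ⟨?_, ?_, ?_⟩)
  · rw [hieq]; exact hs2.1
  · rw [hieq]; exact hle3
  · linarith [hs2.2]

end AltSnakePaper
end

section
/- Let (𝐬, r(𝐬)) ∈ 𝒮 be connected and stable, with r(𝐬) = (1, r_1, …, r_k). Let 1 ≤ m ≤ k−1 be such that 𝐬(r_{m−1}−1, r_m) ∈ S_← and assume r_m + 2 ≤ r. If j_{r_m−1} = j_{r_m+1}, then r_{m+1} = r_m + 1, and if moreover m ≥ 2 then r_m > r_{m−1} + 1. -/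
namespace AltSnakePaper

/-- Proposition (jeq (ii)): for a connected stable alternating snake, if
`𝐬(r_{m−1}−1, r_m) ∈ S_←`, `r_m + 2 ≤ r` and `j_{r_m−1} = j_{r_m+1}`, then
`r_{m+1} = r_m + 1`, and if moreover `m ≥ 2` then `r_m > r_{m−1} + 1`. -/
theorem stmt_12 (n r k : ℕ) (hn : 1 ≤ n) (rr : ℕ → ℕ) (ii jj : ℕ → ℤ)
    (h : IsAltSnake n r k rr ii jj)
    (hc : SegConnected n ii jj 0 r) (hst : Stable k rr ii jj)
    (m : ℕ) (hm1 : 1 ≤ m) (hm2 : m < k)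
    (hdir : SLeft ii jj (rr (m - 1) - 1) (rr m)) (hr2 : rr m + 2 ≤ r)
    (hjeq : jj (rr m - 1) = jj (rr m + 1)) :
    rr (m + 1) = rr m + 1 ∧ (2 ≤ m → rr (m - 1) + 1 < rr m) := by
  obtain ⟨hr, hk, mem, distinct, rr0, rrk, rrmono, mono, alt, nonoverlap⟩ := h
  -- monotonicity of rr on [0, k]
  have hmono' : ∀ d a : ℕ, a + d ≤ k → rr a ≤ rr (a + d) := by
    intro d
    induction d with
    | zero => intro a _; exact le_refl _
    | succ d ih =>
      intro a hak
      have h2 := rrmono (a + d) (by omega)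
      have h3 := ih a (by omega)
      exact le_trans h3 (le_of_lt h2)
  have hmono : ∀ a b : ℕ, a ≤ b → b ≤ k → rr a ≤ rr b := by
    intro a b hab hbk
    have h' := hmono' (b - a) a (by omega)
    rwa [show a + (b - a) = b by omega] at h'
  have hrm1 : 1 ≤ rr (m - 1) := by
    have h' := hmono 0 (m - 1) (by omega) (by omega); rw [rr0] at h'; omega
  have hlt1 : rr (m - 1) < rr m := by
    have h' := rrmono (m - 1) (by omega)
    rwa [show m - 1 + 1 = m by omega] at h'
  have hq2 : 2 ≤ rr m := by omega
  have hlt2 : rr m < rr (m + 1) := rrmono m hm2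
  have hlerk : rr (m + 1) ≤ r := by
    have h' := hmono (m + 1) k (by omega) (le_refl k); rw [rrk] at h'; omega
  have e1 : rr m - 1 + 1 = rr m := by omega
  -- the pair (rr m - 1, rr m) is decreasing
  have hA := hdir (rr m - 1) (by omega) (by omega)
  rw [e1] at hA
  -- segment m is not in S_→
  have hnR : ¬ SRight ii jj (rr (m - 1) - 1) (rr m) := by
    intro hR
    have h1 := hR (rr (m - 1)) (by omega) (by omega)
    have h2 := hdir (rr (m - 1)) (by omega) (by omega)
    linarith [h1.1, h2.1]
  -- segment m+1 is in S_→
  have haltm := alt m hm1 hm2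
  have hmono' := mono (m + 1) (by omega) (by omega)
  rw [show m + 1 - 1 = m from rfl] at hmono'
  have hRnext : SRight ii jj (rr m - 1) (rr (m + 1)) := by
    rcases hmono' with h' | h'
    · exact h'
    · exact absurd (haltm.mpr h') hnR
  -- the pair (rr m, rr m + 1) is increasing
  have hB := hRnext (rr m) (by omega) (by omega)
  have hmemq1 := mem (rr m - 1) (by omega) (by omega)
  have hstab := hst m hm1 hm2
  constructor
  · -- claim 1 : rr (m+1) = rr m + 1
    by_contra hne
    have hge : rr m + 2 ≤ rr (m + 1) := by omega
    have hC := hRnext (rr m + 1) (by omega) hge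
    have e3 : rr m + 1 + 1 = rr m + 2 := rfl
    rw [e3] at hC
    have hconn := hc (rr m + 1) (by omega) (by omega)
    rw [e3] at hconn
    have hov : ii (rr m + 2) ≤ jj (rr m + 1) := by
      rcases hconn.1 with ⟨h1, h2, h3⟩ | ⟨h1, h2, h3⟩
      · exact h2
      · linarith [hC.1]
    have hnov := nonoverlap m (rr m - 1) (rr m + 2) hm1 hm2 (by omega) (by omega)
      (by omega) (by omega)
    have hii2 : ii (rr m + 2) ≤ ii (rr m - 1) := by
      by_contra h'
      exact hnov (Or.inl ⟨by linarith, by linarith [hjeq], by linarith [hjeq, hC.2]⟩)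
    have h' := hstab.1 (by linarith [hC.1])
    linarith [hmemq1.1, hjeq]
  · -- claim 2 : if 2 ≤ m then rr (m-1) + 1 < rr m
    intro hm2'
    by_contra hle'
    have heq : rr m = rr (m - 1) + 1 := by omega
    have hrr1 : 2 ≤ rr 1 := by have h' := rrmono 0 (by omega); rw [rr0] at h'; exact h'
    have hq3 : 3 ≤ rr m := by
      have := hmono 1 (m - 1) (by omega) (by omega); omega
    -- ii (rr m - 1) < ii (rr m + 1)
    have hii : ii (rr m - 1) < ii (rr m + 1) := by
      have hd := distinct (rr m - 1) (rr m + 1) (by omega) (by omega) (by omega)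
        (by omega) (by omega)
      rcases lt_trichotomy (ii (rr m - 1)) (ii (rr m + 1)) with h' | h' | h'
      · exact h'
      · rcases hd with h'' | h''
        · exact absurd h' h''
        · exact absurd hjeq h''
      · have := hstab.1 h'
        linarith [hmemq1.1, hjeq]
    -- segment m-1 is in S_→
    have haltm1 := alt (m - 1) (by omega) (by omega)
    rw [show m - 1 + 1 = m by omega] at haltm1
    have hRprev := haltm1.mpr hdir
    have hge1 : 1 ≤ rr (m - 1 - 1) := by
      have h' := hmono 0 (m - 1 - 1) (by omega) (by omega); rw [rr0] at h'; omega
    have hlt0 : rr (m - 1 - 1) < rr (m - 1) := by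
      have h' := rrmono (m - 1 - 1) (by omega)
      rwa [show m - 1 - 1 + 1 = m - 1 by omega] at h'
    have hD := hRprev (rr m - 2) (by omega) (by omega)
    rw [show rr m - 2 + 1 = rr m - 1 by omega] at hD
    -- connectivity of (rr m - 2, rr m - 1)
    have hconn2 := hc (rr m - 2) (by omega) (by omega)
    rw [show rr m - 2 + 1 = rr m - 1 by omega] at hconn2
    have hov2 : ii (rr m - 1) ≤ jj (rr m - 2) := by
      rcases hconn2.1 with ⟨h1, h2, h3⟩ | ⟨h1, h2, h3⟩
      · exact h2
      · linarith [hD.1]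
    -- nonoverlap of (rr m - 2) and (rr m + 1) across cut m-1
    have hnov2 := nonoverlap (m - 1) (rr m - 2) (rr m + 1) (by omega) (by omega)
      (by omega) (by omega) (by omega) (by omega)
    have hkey : jj (rr m - 2) < ii (rr m + 1) := by
      by_contra h'
      exact hnov2 (Or.inl ⟨by linarith, by linarith, by linarith [hjeq, hD.2]⟩)
    -- connectivity of (rr m, rr m + 1)
    have hconn3 := hc (rr m) (by omega) (by omega)
    have hov3 : ii (rr m + 1) ≤ jj (rr m) := by
      rcases hconn3.1 with ⟨h1, h2, h3⟩ | ⟨h1, h2, h3⟩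
      · exact h2
      · linarith [hB.1]
    -- stability at m-1
    have hstab1 := hst (m - 1) (by omega) (by omega)
    rw [show rr (m - 1) + 1 = rr m by omega, show rr (m - 1) - 1 = rr m - 2 by omega]
      at hstab1
    have := hstab1.2 (by linarith)
    linarith [hA.1, hov2]

end AltSnakePaper
end

section
/- Let (𝐬, r(𝐬)) ∈ 𝒮 be prime and stable with r(𝐬) = (1, r_1, …, r_k). For 1 ≤ p ≤ r_1 define 𝐬_p ∈ 𝕀_n^{r−1} by 𝐬_p = ([i_1,j_2],[i_2,j_3],…,[i_{p−1},j_p]) ∨ 𝐬(p,r) if 𝐬(0,r_1) ∈ S_←, and 𝐬_p = ([i_2,j_1],[i_3,j_2],…,[i_p,j_{p−1}]) ∨ 𝐬(p,r) if 𝐬(0,r_1) ∈ S_→ (so 𝐬_1 = 𝐬(1,r)). Then, with r(𝐬_p) = (1, r_{1+δ}−1, r_{2+δ}−1, …, r_k−1) where δ = 1 if r_1 = 2 and δ = 0 otherwise (degenerate entries being omitted for small r), the pair (𝐬_p, r(𝐬_p)) is a stable alternating snake. -/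
namespace AltSnakePaper

/-- `δ = 1` if `r_1 = 2` and `δ = 0` otherwise. -/
def delta1 (rr : ℕ → ℕ) : ℕ := if rr 1 = 2 then 1 else 0

/-- The r-vector `(1, r_{1+δ}−1, …, r_k−1)` of the snake `𝐬_p`. -/
def rrQ (rr : ℕ → ℕ) : ℕ → ℕ := fun t => if t = 0 then 1 else rr (t + delta1 rr) - 1

/-- The condition for the entry `A(𝐬)_{p,ℓ}` to be `v(i_p, j_ℓ)` (rather than `0`),
with the conventions `r_{-1} = 1` (note `rr 0 = 1` and truncated subtraction) and
`r_{k+1} = r` (note `rr k = r` and the clamping `min (m+1) k`). -/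
def EntryOK (n k : ℕ) (rr : ℕ → ℕ) (ii jj : ℕ → ℤ) (p ℓ : ℕ) : Prop :=
  0 ≤ jj ℓ - ii p ∧ jj ℓ - ii p ≤ (n : ℤ) + 1 ∧
  SegConnected n ii jj (min p ℓ - 1) (max p ℓ) ∧
  ∀ m, 1 ≤ m → m ≤ k → rr (m - 1) ≤ p → p ≤ rr m →
    (SLeft ii jj (rr (m - 1) - 1) (rr m) → rr (m - 2) ≤ ℓ ∧ ℓ ≤ rr (min (m + 1) k)) ∧
    (SRight ii jj (rr (m - 1) - 1) (rr m) → rr (m - 1) ≤ ℓ ∧ ℓ ≤ rr m)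

open Classical in
/-- The `(p,ℓ)` entry of the matrix `A(𝐬)` (1-indexed). -/
noncomputable def Aent {R : Type*} [CommRing R] (v : ℤ → ℤ → R)
    (n k : ℕ) (rr : ℕ → ℕ) (ii jj : ℕ → ℤ) (p ℓ : ℕ) : R :=
  if EntryOK n k rr ii jj p ℓ then v (ii p) (jj ℓ) else 0

/-- The matrix `A(𝐬)`. -/
noncomputable def snakeMat {R : Type*} [CommRing R] (v : ℤ → ℤ → R)
    (n r k : ℕ) (rr : ℕ → ℕ) (ii jj : ℕ → ℤ) : Matrix (Fin r) (Fin r) R :=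
  Matrix.of fun a b => Aent v n k rr ii jj (a.1 + 1) (b.1 + 1)

section Aux

variable {n r k : ℕ} {rr : ℕ → ℕ} {ii jj : ℕ → ℤ}

lemma rr_le_rr (h : IsAltSnake n r k rr ii jj) :
    ∀ a b : ℕ, a ≤ b → b ≤ k → rr a ≤ rr b := by
  intro a b hab hbk
  induction b with
  | zero => simp at hab; simp [hab]
  | succ b ih =>
    rcases Nat.lt_or_ge a (b+1) with hlt | hge
    · have h1 : rr b < rr (b+1) := h.rrmono b (by omega)
      have h2 : rr a ≤ rr b := ih (by omega) (by omega)
      omega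
    · have : a = b + 1 := by omega
      simp [this]

lemma rr_lt_rr (h : IsAltSnake n r k rr ii jj) :
    ∀ a b : ℕ, a < b → b ≤ k → rr a < rr b := by
  intro a b hab hbk
  have h1 : rr a ≤ rr (b-1) := rr_le_rr h a (b-1) (by omega) (by omega)
  have h2 : rr (b-1) < rr b := by
    have := h.rrmono (b-1) (by omega)
    have hb : b - 1 + 1 = b := by omega
    rwa [hb] at this
  omega

lemma rr_pos (h : IsAltSnake n r k rr ii jj) {a : ℕ} (ha : a ≤ k) : 1 ≤ rr a := by
  have h1 := rr_le_rr h 0 a (by omega) ha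
  have h2 := h.rr0
  omega

lemma rr_ge (h : IsAltSnake n r k rr ii jj) : ∀ a, a ≤ k → a + 1 ≤ rr a := by
  intro a
  induction a with
  | zero => intro _; simp [h.rr0]
  | succ a ih =>
    intro hk
    have h1 := ih (by omega)
    have h2 := h.rrmono a (by omega)
    omega

lemma two_le_rr1 (h : IsAltSnake n r k rr ii jj) (hk : 1 ≤ k) : 2 ≤ rr 1 :=
  rr_ge h 1 hk

lemma not_both' (f g : ℕ → ℤ) (a b : ℕ) (h2 : a + 2 ≤ b) :
    SLeft f g a b → SRight f g a b → False := by
  intro hL hR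
  have h1 := hL (a+1) (le_refl _) h2
  have h3 := hR (a+1) (le_refl _) h2
  linarith [h1.1, h3.1]

end Aux
section Aux2

variable {n r k : ℕ} {rr : ℕ → ℕ} {ii jj : ℕ → ℤ}

/-- direction of each segment: odd segments go left, even segments go right. -/
lemma dir (h : IsAltSnake n r k rr ii jj) (hsl : SLeft ii jj 0 (rr 1)) :
    ∀ m, 1 ≤ m → m ≤ k →
      (Odd m → SLeft ii jj (rr (m-1) - 1) (rr m)) ∧
      (Even m → SRight ii jj (rr (m-1) - 1) (rr m)) := by
  intro m
  induction m with
  | zero => omega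
  | succ m ih =>
    intro _ hmk
    rcases Nat.eq_or_lt_of_le (show 1 ≤ m + 1 by omega) with h1 | h1
    · constructor
      · intro _
        have : rr (1-1) - 1 = 0 := by simp [h.rr0]
        rw [← h1, this]
        exact hsl
      · intro hev
        rw [← h1] at hev
        exact absurd hev (by decide)
    · -- m ≥ 1
      have hm1 : 1 ≤ m := by omega
      have hmk' : m ≤ k := by omega
      have IH := ih hm1 hmk'
      have A := h.alt m hm1 (by omega)
      have hseg : rr (m-1) + 1 ≤ rr m := by
        have h2 := rr_lt_rr h (m-1) m (by omega) hmk'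
        omega
      have hNB : ¬ (SLeft ii jj (rr (m-1) - 1) (rr m) ∧ SRight ii jj (rr (m-1) - 1) (rr m)) := by
        rintro ⟨hL, hR⟩
        exact not_both' ii jj _ _ (by have := rr_pos h (show m-1 ≤ k by omega); omega) hL hR
      have goal_a : rr (m + 1 - 1) - 1 = rr m - 1 := by simp
      rw [goal_a]
      rcases Nat.even_or_odd m with hev | hod
      · have hR := IH.2 hev
        have hL1 := A.mp hR
        constructor
        · intro _; exact hL1
        · intro hev1
          exfalso
          rcases hev with ⟨t, ht⟩; rcases hev1 with ⟨t', ht'⟩; omega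
      · have hL := IH.1 hod
        have hnR : ¬ SRight ii jj (rr (m-1) - 1) (rr m) := fun hR => hNB ⟨hL, hR⟩
        have hnL1 : ¬ SLeft ii jj (rr m - 1) (rr (m+1)) := fun hs => hnR (A.mpr hs)
        have hR1 : SRight ii jj (rr m - 1) (rr (m+1)) := by
          rcases h.mono (m+1) (by omega) hmk with hx | hx
          · simpa using hx
          · exact absurd (by simpa using hx) hnL1
        constructor
        · intro hod1
          exfalso
          rcases hod with ⟨t, ht⟩; rcases hod1 with ⟨t', ht'⟩; omega
        · intro _; exact hR1

/-- consecutive intervals overlap in one of two ways -/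
lemma chain (hconn : SegConnected n ii jj 0 r) {u : ℕ} (h1 : 1 ≤ u) (h2 : u + 1 ≤ r) :
    (ii u < ii (u+1) ∧ ii (u+1) ≤ jj u ∧ jj u < jj (u+1)) ∨
    (ii (u+1) < ii u ∧ ii u ≤ jj (u+1) ∧ jj (u+1) < jj u) :=
  (hconn u h1 h2).1

lemma chainL_of_sleft (hconn : SegConnected n ii jj 0 r) {a b u : ℕ}
    (hL : SLeft ii jj a b) (h1 : a + 1 ≤ u) (h2 : u + 1 ≤ b) (hbr : b ≤ r) (hu : 1 ≤ u) :
    ii (u+1) < ii u ∧ ii u ≤ jj (u+1) ∧ jj (u+1) < jj u := by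
  rcases chain hconn hu (by omega) with hc | hc
  · exact absurd (hL u h1 h2).1 (by linarith [hc.1])
  · exact hc

lemma chainR_of_sright (hconn : SegConnected n ii jj 0 r) {a b u : ℕ}
    (hR : SRight ii jj a b) (h1 : a + 1 ≤ u) (h2 : u + 1 ≤ b) (hbr : b ≤ r) (hu : 1 ≤ u) :
    ii u < ii (u+1) ∧ ii (u+1) ≤ jj u ∧ jj u < jj (u+1) := by
  rcases chain hconn hu (by omega) with hc | hc
  · exact hc
  · exact absurd (hR u h1 h2).1 (by linarith [hc.1])

lemma sleft_lt {f g : ℕ → ℤ} {a b : ℕ} (hL : SLeft f g a b) :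
    ∀ c d, a + 1 ≤ c → c < d → d ≤ b → f d < f c ∧ g d < g c := by
  intro c d hc hcd hdb
  induction d with
  | zero => omega
  | succ d ih =>
    rcases Nat.lt_or_ge c d with hlt | hge
    · have h1 := ih (by omega) (by omega)
      have h2 := hL d (by omega) hdb
      exact ⟨by linarith [h1.1, h2.1], by linarith [h1.2, h2.2]⟩
    · have : c = d := by omega
      subst this
      exact ⟨(hL c hc hdb).1, (hL c hc hdb).2⟩

lemma sright_le {f g : ℕ → ℤ} {a b : ℕ} (hR : SRight f g a b) :
    ∀ c d, a + 1 ≤ c → c ≤ d → d ≤ b → f c ≤ f d ∧ g c ≤ g d := by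
  intro c d hc hcd hdb
  induction d with
  | zero =>
    have : c = 0 := by omega
    subst this; exact ⟨le_refl _, le_refl _⟩
  | succ d ih =>
    rcases Nat.lt_or_ge c (d+1) with hlt | hge
    · have h1 := ih (by omega) (by omega)
      have h2 := hR d (by omega) hdb
      exact ⟨by linarith [h1.1, h2.1], by linarith [h1.2, h2.2]⟩
    · have : c = d + 1 := by omega
      subst this; exact ⟨le_refl _, le_refl _⟩

lemma find_seg (h : IsAltSnake n r k rr ii jj) {v a : ℕ} :
    ∀ b, b ≤ k → a ≤ b → rr a < v → v ≤ rr b →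
      ∃ M, a ≤ M ∧ M < b ∧ rr M < v ∧ v ≤ rr (M+1) := by
  intro b
  induction b with
  | zero =>
    intro _ hab h1 h2
    have : a = 0 := by omega
    subst this; omega
  | succ b ih =>
    intro hbk hab h1 h2
    rcases Nat.lt_or_ge (rr b) v with hlt | hge
    · have hab' : a ≤ b := by
        rcases Nat.eq_or_lt_of_le hab with he | hl
        · exfalso; rw [he] at h1; omega
        · omega
      exact ⟨b, hab', by omega, hlt, h2⟩
    · have hab' : a ≤ b := by
        rcases Nat.eq_or_lt_of_le hab with he | hl
        · exfalso; rw [he] at h1; omega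
        · omega
      exact (ih (by omega) hab' h1 hge).imp (fun M ⟨x,y,z,w⟩ => ⟨x, by omega, z, w⟩)

end Aux2
section Aux3

variable {n r k : ℕ} {rr : ℕ → ℕ} {ii jj : ℕ → ℤ}

lemma key1 (h : IsAltSnake n r k rr ii jj) (hconn : SegConnected n ii jj 0 r)
    (hpr : ∀ m, 1 ≤ m → m < k → 1 < rr m → rr m < r →
      ii (rr m - 1) ≠ ii (rr m + 1) ∧ jj (rr m - 1) ≠ jj (rr m + 1))
    (hstable : Stable k rr ii jj) (hsl : SLeft ii jj 0 (rr 1)) (hk2 : 2 ≤ k) :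
    ii (rr 1 - 1) < ii (rr 1 + 1) := by
  have hr2 : 2 ≤ rr 1 := two_le_rr1 h (by omega)
  have g12 : rr 1 < rr 2 := rr_lt_rr h 1 2 (by omega) hk2
  have g2k : rr 2 ≤ rr k := rr_le_rr h 2 k hk2 le_rfl
  have hrk := h.rrk
  have hr1r : rr 1 < r := by omega
  have prime1 := hpr 1 le_rfl (by omega) (by omega) hr1r
  rcases lt_trichotomy (ii (rr 1 - 1)) (ii (rr 1 + 1)) with hlt | heq | hgt
  · exact hlt
  · exact absurd heq prime1.1
  · exfalso
    have st := (hstable 1 le_rfl (by omega)).1 hgt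
    have seg2R' : SRight ii jj (rr 1 - 1) (rr 2) := by
      have := (dir h hsl 2 (by omega) hk2).2 ⟨1, rfl⟩
      simpa using this
    have cR := chainR_of_sright hconn seg2R' (u := rr 1) (by omega) (by omega) (by omega) (by omega)
    have cL := chainL_of_sleft hconn hsl (u := rr 1 - 1) (by omega) (by omega) (by omega) (by omega)
    have e5 : rr 1 - 1 + 1 = rr 1 := by omega
    rw [e5] at cL
    linarith [cR.2.2, cL.2.1]

lemma no_ghost (h : IsAltSnake n r k rr ii jj) (hk : 1 ≤ k)
    (hconn : SegConnected n ii jj 0 r)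
    (hpr : ∀ m, 1 ≤ m → m < k → 1 < rr m → rr m < r →
      ii (rr m - 1) ≠ ii (rr m + 1) ∧ jj (rr m - 1) ≠ jj (rr m + 1))
    (hstable : Stable k rr ii jj) (hsl : SLeft ii jj 0 (rr 1))
    {s v : ℕ} (hs1 : 1 ≤ s) (hs2 : s + 1 ≤ rr 1) (hv1 : rr 1 < v) (hv2 : v ≤ r)
    (hiv : ii v = ii s) (hjv : jj v = jj (s + 1)) : False := by
  have hr2 : 2 ≤ rr 1 := two_le_rr1 h hk
  have hrk := h.rrk
  have hk2 : 2 ≤ k := by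
    by_contra hx
    have hk1 : k = 1 := by omega
    rw [hk1] at hrk; omega
  obtain ⟨w, rfl⟩ : ∃ w, v = w + 1 := ⟨v - 1, by omega⟩
  have hw0 : rr 1 ≤ w := by omega
  rcases chain hconn (u := w) (by omega) (by omega) with hA | hB
  · -- ii w < ii (w+1) ∧ ii (w+1) ≤ jj w ∧ jj w < jj (w+1)
    by_cases hw : w = rr 1
    · subst hw
      have g12 : rr 1 < rr 2 := rr_lt_rr h 1 2 (by omega) hk2
      have g2k : rr 2 ≤ rr k := rr_le_rr h 2 k hk2 le_rfl
      have prime1 := hpr 1 le_rfl (by omega) (by omega) (by omega)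
      have hne1 : s + 1 ≠ rr 1 := by
        intro he
        have h1 := hA.2.2
        rw [hjv, he] at h1
        exact lt_irrefl _ h1
      have hne2 : s + 1 ≠ rr 1 - 1 := by
        intro he
        apply prime1.2
        rw [← he, ← hjv]
      have hs3 : s + 1 ≤ rr 1 - 2 := by omega
      apply h.nonoverlap 1 (rr 1 - 1) (rr 1 + 1) le_rfl (by omega) (by omega) (by omega)
        (by omega) hv2
      left
      refine ⟨?_, ?_, ?_⟩
      · rw [hiv]
        exact (sleft_lt hsl s (rr 1 - 1) (by omega) (by omega) (by omega)).1
      · have l1 : ii (rr 1 + 1) ≤ jj (rr 1) := hA.2.1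
        have l2 : jj (rr 1) < jj (rr 1 - 1) :=
          (sleft_lt hsl (rr 1 - 1) (rr 1) (by omega) (by omega) (by omega)).2
        linarith
      · rw [hjv]
        exact (sleft_lt hsl (s + 1) (rr 1 - 1) (by omega) (by omega) (by omega)).2
    · have hw1 : rr 1 < w := by omega
      apply h.nonoverlap 1 s w le_rfl (by omega) hs1 (by omega) hw1 (by omega)
      right
      have hjs : jj (s + 1) < jj s := (hsl s hs1 hs2).2
      refine ⟨by rw [← hiv]; exact hA.1, by rw [← hiv]; exact hA.2.1, ?_⟩
      have h1 := hA.2.2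
      rw [hjv] at h1
      linarith
  · -- ii (w+1) < ii w ∧ ii w ≤ jj (w+1) ∧ jj (w+1) < jj w
    have seg2R : SRight ii jj (rr 1 - 1) (rr 2) := by
      have := (dir h hsl 2 (by omega) hk2).2 ⟨1, rfl⟩
      simpa using this
    have hv3 : rr 2 < w + 1 := by
      by_contra hle
      push_neg at hle
      have := (seg2R w (by omega) hle).1
      linarith [hB.1]
    have hk3 : 3 ≤ k := by
      by_contra hkk
      push_neg at hkk
      have h1 : rr k ≤ rr 2 := rr_le_rr h k 2 (by omega) (by omega)
      omega
    have g12 : rr 1 < rr 2 := rr_lt_rr h 1 2 (by omega) (by omega)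
    obtain ⟨M, hM2, hMk, hMv1, hMv2⟩ :=
      find_seg h (a := 2) (v := w + 1) k le_rfl (by omega) hv3 (by rw [hrk]; exact hv2)
    have e1 : ii (w + 1) = ii s := hiv
    have e2 : jj (w + 1) = jj (s + 1) := hjv
    have hOsw : Overlap (ii (s + 1)) (jj (s + 1)) (ii w) (jj w) := by
      left
      have l1 : ii (s + 1) < ii s := (hsl s hs1 hs2).1
      exact ⟨by linarith [hB.1], by linarith [hB.2.1], by linarith [hB.2.2]⟩
    have g2M : rr 2 ≤ rr M := rr_le_rr h 2 M hM2 (by omega)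
    by_cases hwM : rr M < w
    · exact h.nonoverlap M (s + 1) w (by omega) hMk (by omega) (by omega) hwM (by omega) hOsw
    · have hwM' : w = rr M := by omega
      by_cases hsr : s + 1 < rr 1
      · have gM1 : rr 1 ≤ rr (M - 1) := rr_le_rr h 1 (M - 1) (by omega) (by omega)
        have gM2 : rr (M - 1) < rr M := rr_lt_rr h (M - 1) M (by omega) (by omega)
        exact h.nonoverlap (M - 1) (s + 1) w (by omega) (by omega) (by omega) (by omega)
          (by omega) (by omega) hOsw
      · have hsre : s + 1 = rr 1 := by omega
        by_cases hM3 : 3 ≤ M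
        · have gM1 : rr 2 ≤ rr (M - 1) := rr_le_rr h 2 (M - 1) (by omega) (by omega)
          have gM2 : rr (M - 1) < rr M := rr_lt_rr h (M - 1) M (by omega) (by omega)
          exact h.nonoverlap (M - 1) (s + 1) w (by omega) (by omega) (by omega) (by omega)
            (by omega) (by omega) hOsw
        · have hM2e : M = 2 := by omega
          subst hM2e
          have prime2 := hpr 2 (by omega) (by omega) (by omega) (by omega)
          by_cases hr21 : rr 2 = rr 1 + 1
          · apply prime2.2
            have e6 : rr 2 - 1 = s + 1 := by omega
            rw [e6, ← hwM']
            exact hjv.symm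
          · have st2 := hstable 2 (by omega) (by omega)
            have c1 : ii (rr 2 - 1) < ii (rr 2 - 1 + 1) ∧ jj (rr 2 - 1) < jj (rr 2 - 1 + 1) :=
              seg2R (rr 2 - 1) (by omega) (by omega)
            have e3 : rr 2 - 1 + 1 = rr 2 := by omega
            rw [e3] at c1
            have hc : ii (rr 2) ≤ jj (rr 2 + 1) := by
              have h1 := hB.2.1
              rwa [hwM'] at h1
            have hnot : ¬ ii (rr 2 + 1) < ii (rr 2 - 1) := by
              intro hlt
              have h1 := st2.1 hlt
              linarith [c1.1]
            have hlt2 : ii (rr 2 - 1) < ii (rr 2 + 1) := by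
              rcases lt_trichotomy (ii (rr 2 - 1)) (ii (rr 2 + 1)) with hx | hx | hx
              · exact hx
              · exact absurd hx prime2.1
              · exact absurd hx hnot
            have e4 : ii (rr 2 + 1) = ii (rr 1 - 1) := by
              have hs4 : s = rr 1 - 1 := by omega
              rw [← hwM', hiv, hs4]
            have mo := (sright_le seg2R (rr 1 + 1) (rr 2 - 1) (by omega) (by omega) (by omega)).1
            have hlt3 : ii (rr 1 + 1) < ii (rr 1 - 1) := by
              rw [← e4]; linarith
            have st1 := (hstable 1 (by omega) (by omega)).1 hlt3
            have cR := chainR_of_sright hconn seg2R (u := rr 1) (by omega) (by omega)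
              (by omega) (by omega)
            have cL := chainL_of_sleft hconn hsl (u := rr 1 - 1) (by omega) (by omega)
              (by omega) (by omega)
            have e5 : rr 1 - 1 + 1 = rr 1 := by omega
            rw [e5] at cL
            linarith [cR.2.2, cL.2.1]

end Aux3
section MainL

lemma main_left (n r k : ℕ) (rr : ℕ → ℕ) (ii jj : ℕ → ℤ)
    (h : IsAltSnake n r k rr ii jj) (hk : 1 ≤ k)
    (hconn : SegConnected n ii jj 0 r)
    (hpr : ∀ m, 1 ≤ m → m < k → 1 < rr m → rr m < r →
      ii (rr m - 1) ≠ ii (rr m + 1) ∧ jj (rr m - 1) ≠ jj (rr m + 1))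
    (hstable : Stable k rr ii jj)
    (p : ℕ) (hp1 : 1 ≤ p) (hp2 : p ≤ rr 1)
    (hsl : SLeft ii jj 0 (rr 1)) :
    IsAltSnake n (r - 1) (k - delta1 rr) (rrQ rr)
      (fun s => if s < p then ii s else ii (s + 1)) (fun s => jj (s + 1)) ∧
    Stable (k - delta1 rr) (rrQ rr)
      (fun s => if s < p then ii s else ii (s + 1)) (fun s => jj (s + 1)) := by
  set I : ℕ → ℤ := fun s => if s < p then ii s else ii (s + 1) with hI
  set J : ℕ → ℤ := fun s => jj (s + 1) with hJ
  have hIlt : ∀ s, s < p → I s = ii s := by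
    intro s hs; simp only [hI]; rw [if_pos hs]
  have hIge : ∀ s, p ≤ s → I s = ii (s + 1) := by
    intro s hs; simp only [hI]; rw [if_neg (by omega)]
  have hJv : ∀ s, J s = jj (s + 1) := fun s => rfl
  have hr2 : 2 ≤ rr 1 := two_le_rr1 h hk
  have hrk : rr k = r := h.rrk
  have hgk : k + 1 ≤ rr k := rr_ge h k le_rfl
  have g1k : rr 1 ≤ rr k := rr_le_rr h 1 k hk le_rfl
  have hrge2 : 2 ≤ r := by omega
  have hdval : delta1 rr = if rr 1 = 2 then 1 else 0 := rfl
  have hdle : delta1 rr ≤ 1 := by rw [hdval]; split <;> omega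
  have hd2 : delta1 rr = 1 ↔ rr 1 = 2 := by rw [hdval]; split <;> simp_all
  have hQ0 : rrQ rr 0 = 1 := by simp [rrQ]
  have hQval : ∀ t, t ≠ 0 → rrQ rr t = rr (t + delta1 rr) - 1 := by
    intro t ht; simp [rrQ, ht]
  -- directions of the new segments
  have ndir : ∀ m, 1 ≤ m → m ≤ k - delta1 rr →
      (Odd (m + delta1 rr) → SLeft I J (rrQ rr (m - 1) - 1) (rrQ rr m)) ∧
      (Even (m + delta1 rr) → SRight I J (rrQ rr (m - 1) - 1) (rrQ rr m)) := by
    intro m hm1 hm2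
    by_cases hm1e : m = 1
    · subst hm1e
      have eA : rrQ rr (1 - 1) - 1 = 0 := by rw [hQ0]
      have eB : rrQ rr 1 = rr (1 + delta1 rr) - 1 := hQval 1 (by omega)
      rw [eA, eB]
      by_cases h2 : rr 1 = 2
      · have hdd : delta1 rr = 1 := by rw [hdval, if_pos h2]
        rw [hdd]
        have e11 : (1 : ℕ) + 1 = 2 := rfl
        rw [e11]
        have hk2 : 2 ≤ k := by omega
        have g12 : rr 1 < rr 2 := rr_lt_rr h 1 2 (by omega) hk2
        have g2k : rr 2 ≤ rr k := rr_le_rr h 2 k hk2 le_rfl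
        have seg2R : SRight ii jj (rr 1 - 1) (rr 2) := (dir h hsl 2 (by omega) hk2).2 ⟨1, rfl⟩
        refine ⟨fun hodd => by rcases hodd with ⟨t, ht⟩; omega, fun _ => ?_⟩
        intro s hs1 hs2
        constructor
        · by_cases hsp : s < p
          · have hse : s = 1 := by omega
            rw [hIlt s hsp, hIge (s + 1) (by omega)]
            have hkey := key1 h hconn hpr hstable hsl hk2
            rw [h2] at hkey
            norm_num at hkey
            rw [hse]
            norm_num
            exact hkey
          · rw [hIge s (by omega), hIge (s + 1) (by omega)]
            exact (seg2R (s + 1) (by omega) (by omega)).1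
        · rw [hJv s, hJv (s + 1)]
          exact (seg2R (s + 1) (by omega) (by omega)).2
      · have hdd : delta1 rr = 0 := by rw [hdval, if_neg h2]
        rw [hdd]
        have e10 : (1 : ℕ) + 0 = 1 := rfl
        rw [e10]
        have hr3 : 3 ≤ rr 1 := by omega
        refine ⟨fun _ => ?_, fun hev => by rcases hev with ⟨t, ht⟩; omega⟩
        intro s hs1 hs2
        constructor
        · by_cases hsp1 : s + 1 < p
          · rw [hIlt (s + 1) hsp1, hIlt s (by omega)]
            exact (hsl s (by omega) (by omega)).1
          · by_cases hsp : s < p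
            · rw [hIge (s + 1) (by omega), hIlt s hsp]
              exact (sleft_lt hsl s (s + 2) (by omega) (by omega) (by omega)).1
            · rw [hIge (s + 1) (by omega), hIge s (by omega)]
              exact (hsl (s + 1) (by omega) (by omega)).1
        · rw [hJv s, hJv (s + 1)]
          exact (hsl (s + 1) (by omega) (by omega)).2
    · have hm2' : 2 ≤ m := by omega
      have eA : rrQ rr (m - 1) = rr (m + delta1 rr - 1) - 1 := by
        rw [hQval (m - 1) (by omega)]
        congr 2
        omega
      have eB : rrQ rr m = rr (m + delta1 rr) - 1 := hQval m (by omega)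
      rw [eA, eB]
      have hMk : m + delta1 rr ≤ k := by omega
      have hM2 : 2 ≤ m + delta1 rr := by omega
      have segM := dir h hsl (m + delta1 rr) (by omega) hMk
      have gM1 : rr (m + delta1 rr - 1) < rr (m + delta1 rr) := by
        have e : m + delta1 rr - 1 + 1 = m + delta1 rr := by omega
        have := h.rrmono (m + delta1 rr - 1) (by omega)
        rwa [e] at this
      have gM1b : rr 1 ≤ rr (m + delta1 rr - 1) := rr_le_rr h 1 _ (by omega) (by omega)
      have gMk : rr (m + delta1 rr) ≤ rr k := rr_le_rr h _ k hMk le_rfl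
      constructor
      · intro hodd
        have segL := segM.1 hodd
        intro s hs1 hs2
        have hs1' : rr (m + delta1 rr - 1) - 1 ≤ s := by omega
        have hps : p ≤ s + 1 := by omega
        rw [hIge (s + 1) hps, hJv s, hJv (s + 1)]
        by_cases hsp : s < p
        · exfalso
          have hble : rr (m + delta1 rr - 1) ≤ p := by omega
          have hMe : m + delta1 rr = 2 := by
            by_contra hx
            have h3 : rr 2 ≤ rr (m + delta1 rr - 1) := rr_le_rr h 2 _ (by omega) (by omega)
            have g12 : rr 1 < rr 2 := rr_lt_rr h 1 2 (by omega) (by omega)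
            omega
          rcases hodd with ⟨t, ht⟩
          omega
        · rw [hIge s (by omega)]
          exact segL (s + 1) (by omega) (by omega)
      · intro hev
        have segR := segM.2 hev
        intro s hs1 hs2
        have hs1' : rr (m + delta1 rr - 1) - 1 ≤ s := by omega
        have hps : p ≤ s + 1 := by omega
        rw [hIge (s + 1) hps, hJv s, hJv (s + 1)]
        by_cases hsp : s < p
        · have hble : rr (m + delta1 rr - 1) ≤ p := by omega
          have hMe : m + delta1 rr = 2 := by
            by_contra hx
            have h3 : rr 2 ≤ rr (m + delta1 rr - 1) := rr_le_rr h 2 _ (by omega) (by omega)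
            have g12 : rr 1 < rr 2 := rr_lt_rr h 1 2 (by omega) (by omega)
            omega
          have hk2 : 2 ≤ k := by omega
          have hr1M : rr (m + delta1 rr - 1) = rr 1 := by
            have e : m + delta1 rr - 1 = 1 := by omega
            rw [e]
          have hse : s = rr 1 - 1 := by omega
          have hs2' : s + 1 ≤ rr 2 - 1 := by rw [hMe] at hs2; exact hs2
          have seg2R : SRight ii jj (rr 1 - 1) (rr 2) := (dir h hsl 2 (by omega) hk2).2 ⟨1, rfl⟩
          constructor
          · rw [hIlt s hsp, hse]
            have hkey := key1 h hconn hpr hstable hsl hk2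
            have e : rr 1 - 1 + 1 + 1 = rr 1 + 1 := by omega
            rw [e]
            exact hkey
          · exact (seg2R (s + 1) (by omega) (by omega)).2
        · rw [hIge s (by omega)]
          exact segR (s + 1) (by omega) (by omega)
  have hQpos : ∀ m, m ≤ k - delta1 rr → 1 ≤ rrQ rr m := by
    intro m hm
    by_cases hm0 : m = 0
    · rw [hm0, hQ0]
    · rw [hQval m hm0]
      have := rr_le_rr h 1 (m + delta1 rr) (by omega) (by omega)
      omega
  have hQmono : ∀ m, m < k - delta1 rr → rrQ rr m < rrQ rr (m + 1) := by
    intro m hm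
    by_cases hm0 : m = 0
    · subst hm0
      rw [hQ0, hQval 1 (by omega)]
      have g1 : rr 1 ≤ rr (1 + delta1 rr) := rr_le_rr h 1 (1 + delta1 rr) (by omega) (by omega)
      rcases Nat.eq_or_lt_of_le hdle with hd1 | hd0
      · have : rr 1 < rr (1 + delta1 rr) := rr_lt_rr h 1 (1 + delta1 rr) (by omega) (by omega)
        omega
      · have hd0' : delta1 rr = 0 := by omega
        have : rr 1 ≠ 2 := fun hx => by simp [hd2.mpr hx] at hd0'
        omega
    · rw [hQval m hm0, hQval (m + 1) (by omega)]
      have h1 := rr_lt_rr h (m + delta1 rr) (m + 1 + delta1 rr) (by omega) (by omega)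
      have h2 := rr_le_rr h 1 (m + delta1 rr) (by omega) (by omega)
      omega
  refine ⟨⟨?_, ?_, ?_, ?_, ?_, ?_, ?_, ?_, ?_, ?_⟩, ?_⟩
  · -- hr
    omega
  · -- hk
    omega
  · -- mem
    intro s h1 h2
    by_cases hsp : s < p
    · rw [hIlt s hsp, hJv s]
      exact (hconn s h1 (by omega)).2.1
    · rw [hIge s (by omega), hJv s]
      exact h.mem (s + 1) (by omega) (by omega)
  · -- distinct
    have daux : ∀ s t, 1 ≤ s → s < t → t ≤ r - 1 → I s ≠ I t ∨ J s ≠ J t := by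
      intro s t h1 h2 h3
      by_cases htr : t + 1 ≤ rr 1
      · right
        have hlt := (sleft_lt hsl (s + 1) (t + 1) (by omega) (by omega) htr).2
        rw [hJv s, hJv t]
        exact fun he => absurd he.symm (ne_of_lt hlt)
      · have htp : p ≤ t := by omega
        by_cases hsp : s < p
        · by_contra hcc
          push_neg at hcc
          obtain ⟨hc1, hc2⟩ := hcc
          rw [hIlt s hsp, hIge t htp] at hc1
          rw [hJv s, hJv t] at hc2
          exact no_ghost h hk hconn hpr hstable hsl (s := s) (v := t + 1) h1 (by omega)
            (by omega) (by omega) hc1.symm hc2.symm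
        · rw [hIge s (by omega), hIge t htp, hJv s, hJv t]
          exact h.distinct (s + 1) (t + 1) (by omega) (by omega) (by omega) (by omega) (by omega)
    intro s t h1 h2 h3 h4 hne
    rcases lt_or_gt_of_ne hne with hlt | hgt
    · exact daux s t h1 hlt h4
    · exact (daux t s h3 hgt h2).imp Ne.symm Ne.symm
  · -- rr0
    exact hQ0
  · -- rrk
    by_cases hk0 : k - delta1 rr = 0
    · rw [hk0, hQ0]
      have hd1 : delta1 rr = 1 := by omega
      have h2 : rr 1 = 2 := hd2.mp hd1
      have hk1 : k = 1 := by omega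
      rw [hk1] at hrk
      omega
    · rw [hQval _ hk0]
      have e : k - delta1 rr + delta1 rr = k := by omega
      rw [e, hrk]
  · -- rrmono
    exact hQmono
  · -- mono
    intro m h1 h2
    rcases Nat.even_or_odd (m + delta1 rr) with he | ho
    · exact Or.inl ((ndir m h1 h2).2 he)
    · exact Or.inr ((ndir m h1 h2).1 ho)
  · -- alt
    intro m h1 h2
    have N1 := ndir m h1 (by omega)
    have N2 := ndir (m + 1) (by omega) (by omega)
    have nb : ∀ m', 1 ≤ m' → m' ≤ k - delta1 rr →
        SLeft I J (rrQ rr (m' - 1) - 1) (rrQ rr m') →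
        SRight I J (rrQ rr (m' - 1) - 1) (rrQ rr m') → False := by
      intro m' hm1 hm2 hL hR
      have e : rrQ rr (m' - 1) < rrQ rr m' := by
        have := hQmono (m' - 1) (by omega)
        have e2 : m' - 1 + 1 = m' := by omega
        rwa [e2] at this
      exact not_both' I J _ _ (by have := hQpos (m' - 1) (by omega); omega) hL hR
    rcases Nat.even_or_odd (m + delta1 rr) with he | ho
    · have hodd : Odd (m + 1 + delta1 rr) := by
        rcases he with ⟨t, ht⟩; exact ⟨t, by omega⟩
      exact iff_of_true (N1.2 he) (N2.1 hodd)
    · have hev : Even (m + 1 + delta1 rr) := by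
        rcases ho with ⟨t, ht⟩; exact ⟨t + 1, by omega⟩
      refine iff_of_false (fun hR => nb m h1 (by omega) (N1.1 ho) hR)
        (fun hL => nb (m + 1) (by omega) (by omega) hL (N2.2 hev))
  · -- nonoverlap
    intro m s t h1 h2 h3 h4 h5 h6
    have em : rrQ rr m = rr (m + delta1 rr) - 1 := hQval m (by omega)
    have hMk : m + delta1 rr < k := by omega
    have hM1 : 1 ≤ m + delta1 rr := by omega
    have grM : rr 1 ≤ rr (m + delta1 rr) := rr_le_rr h 1 _ hM1 (by omega)
    have htp : p ≤ t := by omega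
    rw [hIge t (by omega), hJv s, hJv t]
    by_cases hsp : s < p
    · rw [hIlt s hsp]
      intro hO
      have fa := chainL_of_sleft hconn hsl (u := s) (by omega) (by omega) (by omega) (by omega)
      rcases hO with ⟨o1, o2, o3⟩ | ⟨o1, o2, o3⟩
      · exact h.nonoverlap (m + delta1 rr) (s + 1) (t + 1) hM1 hMk (by omega) (by omega)
          (by omega) (by omega) (Or.inl ⟨by linarith [fa.1], o2, o3⟩)
      · exact h.nonoverlap (m + delta1 rr) s (t + 1) hM1 hMk (by omega) (by omega)
          (by omega) (by omega) (Or.inr ⟨o1, o2, by linarith [fa.2.2]⟩)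
    · rw [hIge s (by omega)]
      exact h.nonoverlap (m + delta1 rr) (s + 1) (t + 1) hM1 hMk (by omega) (by omega)
        (by omega) (by omega)
  · -- Stable
    intro m h1 h2
    have em : rrQ rr m = rr (m + delta1 rr) - 1 := hQval m (by omega)
    have hMk : m + delta1 rr < k := by omega
    have hM1 : 1 ≤ m + delta1 rr := by omega
    have grM : rr 1 ≤ rr (m + delta1 rr) := rr_le_rr h 1 _ hM1 (by omega)
    have gMlt : rr (m + delta1 rr) < rr k := rr_lt_rr h _ k hMk le_rfl
    have e1 : rrQ rr m + 1 = rr (m + delta1 rr) := by omega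
    have e2 : rrQ rr m - 1 = rr (m + delta1 rr) - 2 := by omega
    rw [e1, e2, hIge (rr (m + delta1 rr)) (by omega), hJv (rr (m + delta1 rr)),
      hJv (rr (m + delta1 rr) - 2)]
    have e3 : rr (m + delta1 rr) - 2 + 1 = rr (m + delta1 rr) - 1 := by omega
    rw [e3]
    by_cases hlo : rr (m + delta1 rr) - 2 < p
    · rw [hIlt _ hlo]
      by_cases hM1e : m + delta1 rr = 1
      · have hdd : delta1 rr = 0 := by omega
        rw [hM1e] at hlo ⊢
        have h2' : rr 1 ≠ 2 := by
          intro hx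
          have := hd2.mpr hx
          omega
        have hr3 : 3 ≤ rr 1 := by omega
        have hk2 : 2 ≤ k := by omega
        have st1 := hstable 1 (by omega) (by omega)
        have g12 : rr 1 < rr 2 := rr_lt_rr h 1 2 (by omega) (by omega)
        have g2k : rr 2 ≤ rr k := rr_le_rr h 2 k (by omega) le_rfl
        have seg2R : SRight ii jj (rr 1 - 1) (rr 2) := (dir h hsl 2 (by omega) hk2).2 ⟨1, rfl⟩
        constructor
        · intro hx
          by_cases hy : ii (rr 1 + 1) < ii (rr 1 - 1)
          · have hst := st1.1 hy
            have dec : ii (rr 1 - 1) < ii (rr 1 - 2) :=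
              (sleft_lt hsl (rr 1 - 2) (rr 1 - 1) (by omega) (by omega) (by omega)).1
            linarith
          · push_neg at hy
            by_contra hz
            push_neg at hz
            have hw : jj (rr 1 + 1) < jj (rr 1 - 2) := by
              by_contra hw
              push_neg at hw
              have l1 : jj (rr 1 - 1) < jj (rr 1 - 2) :=
                (sleft_lt hsl (rr 1 - 2) (rr 1 - 1) (by omega) (by omega) (by omega)).2
              have l2 := st1.2 (by linarith)
              have cR := chainR_of_sright hconn seg2R (u := rr 1) (by omega) (by omega)
                (by omega) (by omega)
              have l3 : jj (rr 1) < jj (rr 1 - 1) :=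
                (sleft_lt hsl (rr 1 - 1) (rr 1) (by omega) (by omega) (by omega)).2
              linarith [cR.2.1]
            exact h.nonoverlap 1 (rr 1 - 2) (rr 1 + 1) (by omega) (by omega) (by omega)
              (by omega) (by omega) (by omega) (Or.inr ⟨hx, hz, hw⟩)
        · exact st1.2
      · have hM2 : 2 ≤ m + delta1 rr := by omega
        have g2M : rr 2 ≤ rr (m + delta1 rr) := rr_le_rr h 2 _ hM2 (by omega)
        have g12 : rr 1 < rr 2 := rr_lt_rr h 1 2 (by omega) (by omega)
        have hMe : m + delta1 rr = 2 := by
          by_contra hx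
          have h3 : rr 3 ≤ rr (m + delta1 rr) := rr_le_rr h 3 _ (by omega) (by omega)
          have g23 : rr 2 < rr 3 := rr_lt_rr h 2 3 (by omega) (by omega)
          omega
        rw [hMe] at hlo ⊢
        have hk3 : 3 ≤ k := by omega
        have h21 : rr 2 = rr 1 + 1 := by omega
        have g23 : rr 2 < rr 3 := rr_lt_rr h 2 3 (by omega) (by omega)
        have g3k : rr 3 ≤ rr k := rr_le_rr h 3 k (by omega) le_rfl
        have st2 := hstable 2 (by omega) (by omega)
        have seg2R : SRight ii jj (rr 1 - 1) (rr 2) := (dir h hsl 2 (by omega) (by omega)).2 ⟨1, rfl⟩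
        have seg3L : SLeft ii jj (rr 2 - 1) (rr 3) := (dir h hsl 3 (by omega) (by omega)).1 ⟨1, rfl⟩
        have e9 : rr 2 - 1 = rr 1 := by omega
        constructor
        · intro hx
          have e8 : rr 2 - 2 = rr 1 - 1 := by omega
          rw [e8] at hx ⊢
          by_cases hy : ii (rr 2 + 1) < ii (rr 2 - 1)
          · have hst := st2.1 hy
            rw [e9] at hst
            have dec : ii (rr 1) < ii (rr 1 - 1) :=
              (sleft_lt hsl (rr 1 - 1) (rr 1) (by omega) (by omega) (by omega)).1
            linarith
          · push_neg at hy
            by_contra hz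
            push_neg at hz
            have hw : jj (rr 2 + 1) < jj (rr 1 - 1) := by
              by_contra hw
              push_neg at hw
              have l3 : jj (rr 1) < jj (rr 1 - 1) :=
                (sleft_lt hsl (rr 1 - 1) (rr 1) (by omega) (by omega) (by omega)).2
              have l4 := st2.2 (by rw [e9]; linarith)
              rw [e9] at l4
              have cL3 := chainL_of_sleft hconn seg3L (u := rr 2) (by omega) (by omega)
                (by omega) (by omega)
              have cR := chainR_of_sright hconn seg2R (u := rr 1) (by omega) (by omega)
                (by omega) (by omega)
              rw [← h21] at cR
              linarith [l4, cL3.1, cR.2.1]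
            exact h.nonoverlap 2 (rr 1 - 1) (rr 2 + 1) (by omega) (by omega) (by omega)
              (by omega) (by omega) (by omega) (Or.inr ⟨hx, hz, hw⟩)
        · exact st2.2
    · rw [hIge _ (by omega), e3]
      exact hstable (m + delta1 rr) hM1 hMk

end MainL
section Dual

variable {n r k : ℕ} {rr : ℕ → ℕ} {ii jj : ℕ → ℤ}

lemma InIn_neg {i j : ℤ} (h : InIn n i j) : InIn n (-j) (-i) := by
  obtain ⟨a, b⟩ := h
  constructor <;> [linarith; linarith]

lemma Overlap_neg {i1 j1 i2 j2 : ℤ} (h : Overlap i1 j1 i2 j2) :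
    Overlap (-j1) (-i1) (-j2) (-i2) := by
  rcases h with ⟨a, b, c⟩ | ⟨a, b, c⟩
  · exact Or.inr ⟨by linarith, by linarith, by linarith⟩
  · exact Or.inl ⟨by linarith, by linarith, by linarith⟩

lemma ConnPair_neg {i1 j1 i2 j2 : ℤ} (h : ConnPair n i1 j1 i2 j2) :
    ConnPair n (-j1) (-i1) (-j2) (-i2) :=
  ⟨Overlap_neg h.1, InIn_neg h.2.2, InIn_neg h.2.1⟩

lemma SLeft_neg_iff {a b : ℕ} :
    SLeft (fun s => -jj s) (fun s => -ii s) a b ↔ SRight ii jj a b := by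
  constructor
  · intro H s h1 h2
    have := H s h1 h2
    simp only [] at this
    exact ⟨by linarith [this.2], by linarith [this.1]⟩
  · intro H s h1 h2
    have := H s h1 h2
    exact ⟨by show -jj (s+1) < -jj s; linarith [this.2],
           by show -ii (s+1) < -ii s; linarith [this.1]⟩

lemma SRight_neg_iff {a b : ℕ} :
    SRight (fun s => -jj s) (fun s => -ii s) a b ↔ SLeft ii jj a b := by
  constructor
  · intro H s h1 h2
    have := H s h1 h2
    simp only [] at this
    exact ⟨by linarith [this.2], by linarith [this.1]⟩
  · intro H s h1 h2
    have := H s h1 h2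
    exact ⟨by show -jj s < -jj (s+1); linarith [this.2],
           by show -ii s < -ii (s+1); linarith [this.1]⟩

lemma SegConnected_neg {a b : ℕ} (h : SegConnected n ii jj a b) :
    SegConnected n (fun s => -jj s) (fun s => -ii s) a b :=
  fun s h1 h2 => ConnPair_neg (h s h1 h2)

lemma Stable_neg (h : Stable k rr ii jj) :
    Stable k rr (fun s => -jj s) (fun s => -ii s) := by
  intro m h1 h2
  have H := h m h1 h2
  constructor
  · intro hx
    simp only [] at hx ⊢
    have := H.2 (by linarith)
    linarith
  · intro hx
    simp only [] at hx ⊢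
    have := H.1 (by linarith)
    linarith

lemma IsAltSnake_neg (h : IsAltSnake n r k rr ii jj) :
    IsAltSnake n r k rr (fun s => -jj s) (fun s => -ii s) := by
  refine ⟨h.hr, h.hk, ?_, ?_, h.rr0, h.rrk, h.rrmono, ?_, ?_, ?_⟩
  · intro s h1 h2
    exact InIn_neg (h.mem s h1 h2)
  · intro s q h1 h2 h3 h4 h5
    rcases h.distinct s q h1 h2 h3 h4 h5 with hx | hx
    · exact Or.inr (show -ii s ≠ -ii q from fun he => hx (neg_inj.mp he))
    · exact Or.inl (show -jj s ≠ -jj q from fun he => hx (neg_inj.mp he))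
  · intro m h1 h2
    rcases h.mono m h1 h2 with hx | hx
    · exact Or.inr (SLeft_neg_iff.mpr hx)
    · exact Or.inl (SRight_neg_iff.mpr hx)
  · intro m h1 h2
    have A := h.alt m h1 h2
    have hb1 : rr (m - 1) + 1 ≤ rr m := by
      have e1 := rr_pos h (show m - 1 ≤ k by omega)
      have e2 := rr_lt_rr h (m - 1) m (by omega) (by omega)
      omega
    have hb2 : rr m + 1 ≤ rr (m + 1) := by
      have := h.rrmono m h2
      omega
    have hp1 : 1 ≤ rr m := rr_pos h (show m ≤ k by omega)
    have hp0 : 1 ≤ rr (m - 1) := rr_pos h (show m - 1 ≤ k by omega)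
    rw [SRight_neg_iff, SLeft_neg_iff]
    constructor
    · intro hL
      have hnR : ¬ SRight ii jj (rr (m - 1) - 1) (rr m) :=
        fun hR => not_both' ii jj _ _ (by omega) hL hR
      have hnL : ¬ SLeft ii jj (rr m - 1) (rr (m + 1)) := fun hs => hnR (A.mpr hs)
      rcases h.mono (m + 1) (by omega) (by omega) with hx | hx
      · exact hx
      · exact absurd hx hnL
    · intro hR
      by_contra hnL
      have hRm : SRight ii jj (rr (m - 1) - 1) (rr m) := by
        rcases h.mono m h1 (by omega) with hx | hx
        · exact hx
        · exact absurd hx hnL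
      exact not_both' ii jj _ _ (by omega) (A.mp hRm) hR
  · intro m s t h1 h2 h3 h4 h5 h6 hO
    refine h.nonoverlap m s t h1 h2 h3 h4 h5 h6 ?_
    have := Overlap_neg hO
    simpa using this

end Dual

/-- Proposition (sps): for a prime stable alternating snake `𝐬` and `1 ≤ p ≤ r_1`, the
tuple `𝐬_p` (defined according to the direction of `𝐬(0,r_1)`) with r-vector
`(1, r_{1+δ}−1, …, r_k−1)`, `δ = 1` iff `r_1 = 2`, is a stable alternating snake. -/
theorem stmt_14 (n r k : ℕ) (hn : 1 ≤ n) (rr : ℕ → ℕ) (ii jj : ℕ → ℤ)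
    (h : IsAltSnake n r k rr ii jj) (hk : 1 ≤ k)
    (hprime : SegPrime n k rr ii jj 0 r) (hstable : Stable k rr ii jj)
    (p : ℕ) (hp1 : 1 ≤ p) (hp2 : p ≤ rr 1) :
    (SLeft ii jj 0 (rr 1) →
      IsAltSnake n (r - 1) (k - delta1 rr) (rrQ rr)
        (fun s => if s < p then ii s else ii (s + 1)) (fun s => jj (s + 1)) ∧
      Stable (k - delta1 rr) (rrQ rr)
        (fun s => if s < p then ii s else ii (s + 1)) (fun s => jj (s + 1))) ∧
    (SRight ii jj 0 (rr 1) →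
      IsAltSnake n (r - 1) (k - delta1 rr) (rrQ rr)
        (fun s => ii (s + 1)) (fun s => if s < p then jj s else jj (s + 1)) ∧
      Stable (k - delta1 rr) (rrQ rr)
        (fun s => ii (s + 1)) (fun s => if s < p then jj s else jj (s + 1))) := by
  constructor
  · intro hsl
    exact main_left n r k rr ii jj h hk hprime.1
      (fun m a b c d => hprime.2 m a b (by omega) d) hstable p hp1 hp2 hsl
  · intro hsr
    have hD := IsAltSnake_neg h
    have hconnD : SegConnected n (fun s => -jj s) (fun s => -ii s) 0 r :=
      SegConnected_neg hprime.1
    have hprD : ∀ m, 1 ≤ m → m < k → 1 < rr m → rr m < r →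
        -jj (rr m - 1) ≠ -jj (rr m + 1) ∧ -ii (rr m - 1) ≠ -ii (rr m + 1) := by
      intro m a b c d
      have := hprime.2 m a b (by omega) d
      exact ⟨fun he => this.2 (neg_inj.mp he), fun he => this.1 (neg_inj.mp he)⟩
    have hstD : Stable k rr (fun s => -jj s) (fun s => -ii s) := Stable_neg hstable
    have hslD : SLeft (fun s => -jj s) (fun s => -ii s) 0 (rr 1) := SLeft_neg_iff.mpr hsr
    obtain ⟨Ra, Rb⟩ := main_left n r k rr (fun s => -jj s) (fun s => -ii s) hD hk hconnD
      hprD hstD p hp1 hp2 hslD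
    have S1 := IsAltSnake_neg Ra
    have S2 := Stable_neg Rb
    simp only [apply_ite (Neg.neg : ℤ → ℤ), neg_neg] at S1 S2
    exact ⟨S1, S2⟩

end AltSnakePaper
end

section
/- Let (𝐬, r(𝐬)) ∈ 𝒮 be prime and stable with 𝐬(0,r_1) ∈ S_←, let 2 ≤ p ≤ r_1, and set 𝐬_p = ([i_1,j_2],[i_2,j_3],…,[i_{p−1},j_p]) ∨ 𝐬(p,r). If 𝐬_p is not connected, then there exists 1 ≤ p′ < min{p, r_1−1} such that j_s < i_{p′} for all p′ + 2 ≤ s ≤ r_2. -/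
namespace AltSnakePaper

/-- Lemma (spnotconn): for a prime stable alternating snake with `𝐬(0,r_1) ∈ S_←` and
`2 ≤ p ≤ r_1`, if `𝐬_p = ([i_1,j_2],…,[i_{p−1},j_p]) ∨ 𝐬(p,r)` is not connected then
there is `1 ≤ p' < min{p, r_1−1}` with `j_s < i_{p'}` for all `p' + 2 ≤ s ≤ r_2`. -/
theorem stmt_15 (n r k : ℕ) (hn : 1 ≤ n) (rr : ℕ → ℕ) (ii jj : ℕ → ℤ)
    (h : IsAltSnake n r k rr ii jj) (hk : 2 ≤ k)
    (hprime : SegPrime n k rr ii jj 0 r) (hstable : Stable k rr ii jj)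
    (hdir : SLeft ii jj 0 (rr 1))
    (p : ℕ) (hp1 : 2 ≤ p) (hp2 : p ≤ rr 1)
    (hnc : ¬ SegConnected n (fun s => if s < p then ii s else ii (s + 1))
        (fun s => jj (s + 1)) 0 (r - 1)) :
    ∃ p', 1 ≤ p' ∧ p' < p ∧ p' + 1 < rr 1 ∧
      ∀ s, p' + 2 ≤ s → s ≤ rr 2 → jj s < ii p' := by
  -- basic index facts
  have hR1 : 2 ≤ rr 1 := le_trans hp1 hp2
  have hrr12 : rr 1 < rr 2 := h.rrmono 1 (by omega)
  have hmono2 : ∀ b, 2 ≤ b → b ≤ k → rr 2 ≤ rr b := by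
    intro b hb2
    induction b, hb2 using Nat.le_induction with
    | base => intro _; exact le_rfl
    | succ m hm ih =>
      intro hmk
      exact le_trans (ih (by omega)) (le_of_lt (h.rrmono m (by omega)))
  have hrr2r : rr 2 ≤ r := by
    have := hmono2 k hk le_rfl
    rw [h.rrk] at this; exact this
  have hrr1r : rr 1 < r := lt_of_lt_of_le hrr12 hrr2r
  -- connectivity of the original snake
  have hconn : ∀ s, 1 ≤ s → s + 1 ≤ r →
      ConnPair n (ii s) (jj s) (ii (s + 1)) (jj (s + 1)) := by
    intro s h1 h2
    exact hprime.1 s (by omega) h2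
  -- first segment decreasing
  have hL : ∀ s, 1 ≤ s → s + 1 ≤ rr 1 → ii (s + 1) < ii s ∧ jj (s + 1) < jj s := by
    intro s h1 h2; exact hdir s (by omega) h2
  -- second segment increasing
  have hR : ∀ s, rr 1 ≤ s → s + 1 ≤ rr 2 → ii s < ii (s + 1) ∧ jj s < jj (s + 1) := by
    have hnsr : ¬ SRight ii jj (rr 0 - 1) (rr 1) := by
      rw [h.rr0]
      intro hsr
      have h1 := (hsr 1 (by omega) hR1).1
      have h2 := (hL 1 (by omega) hR1).1
      linarith
    have halt := h.alt 1 le_rfl (by omega)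
    have hm2 := h.mono 2 (by omega) hk
    norm_num at halt hm2
    have hnsl : ¬ SLeft ii jj (rr 1 - 1) (rr 2) := fun hsl => hnsr (halt.mpr hsl)
    have hsr2 : SRight ii jj (rr 1 - 1) (rr 2) := hm2.resolve_right hnsl
    intro s h1 h2
    exact hsr2 s (by omega) h2
  -- chains
  have hLc : ∀ a b, 1 ≤ a → a ≤ b → b ≤ rr 1 → ii b ≤ ii a ∧ jj b ≤ jj a := by
    intro a b ha hab
    induction b, hab using Nat.le_induction with
    | base => intro _; exact ⟨le_rfl, le_rfl⟩
    | succ m hm ih =>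
      intro hmk
      have h1 := ih (by omega)
      have h2 := hL m (by omega) hmk
      constructor <;> linarith [h1.1, h1.2, h2.1, h2.2]
  have hRc : ∀ a b, rr 1 ≤ a → a ≤ b → b ≤ rr 2 → ii a ≤ ii b ∧ jj a ≤ jj b := by
    intro a b ha hab
    induction b, hab using Nat.le_induction with
    | base => intro _; exact ⟨le_rfl, le_rfl⟩
    | succ m hm ih =>
      intro hmk
      have h1 := ih (by omega)
      have h2 := hR m (by omega) hmk
      constructor <;> linarith [h1.1, h1.2, h2.1, h2.2]
  have hij : ∀ s, 1 ≤ s → s ≤ r → ii s ≤ jj s := by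
    intro s h1 h2
    have := (h.mem s h1 h2).1; linarith
  -- overlap consequences
  have hOv2 : ∀ s, 1 ≤ s → s + 1 ≤ rr 1 → ii s ≤ jj (s + 1) := by
    intro s h1 h2
    have hc := (hconn s h1 (by omega)).1
    have hl := hL s h1 h2
    rcases hc with ⟨h3, _, _⟩ | ⟨_, h3, _⟩
    · linarith [hl.1]
    · exact h3
  have hOv3 : ∀ s, rr 1 ≤ s → s + 1 ≤ rr 2 → ii (s + 1) ≤ jj s ∧ jj s < jj (s + 1) := by
    intro s h1 h2
    have hc := (hconn s (by omega) (by omega)).1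
    have hl := hR s h1 h2
    rcases hc with ⟨_, h3, h4⟩ | ⟨h3, _, _⟩
    · exact ⟨h3, h4⟩
    · linarith [hl.1]
  -- the key inequality at the join, from primeness and stability
  have hF3 : ii (rr 1 - 1) < ii (rr 1 + 1) := by
    have hpr := hprime.2 1 le_rfl (by omega) (by omega) hrr1r
    have hst := hstable 1 le_rfl (by omega)
    by_contra hcon
    push_neg at hcon
    have hne : ii (rr 1 - 1) ≠ ii (rr 1 + 1) := hpr.1
    have hlt : ii (rr 1 + 1) < ii (rr 1 - 1) := lt_of_le_of_ne hcon (fun e => hne e.symm)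
    have h1 := hst.1 hlt
    have h2 : ii (rr 1 - 1) ≤ jj (rr 1 - 1 + 1) := hOv2 (rr 1 - 1) (by omega) (by omega)
    rw [show rr 1 - 1 + 1 = rr 1 by omega] at h2
    have h3 := (hR (rr 1) le_rfl (by omega)).2
    linarith
  -- extract a failing pair from hnc, and obtain the cut point q
  have key : ∃ q, 1 ≤ q ∧ q < p ∧ q + 2 ≤ rr 1 ∧ jj (q + 2) < ii q := by
    rw [SegConnected] at hnc
    push_neg at hnc
    obtain ⟨s, hs1, hs2, hsc⟩ := hnc
    have hs1' : 1 ≤ s := by omega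
    have hs2' : s + 2 ≤ r := by omega
    rcases lt_trichotomy (s + 1) p with hlt | heq | hgt
    · -- s + 2 ≤ p : pair ([i_s, j_{s+1}], [i_{s+1}, j_{s+2}])
      rw [if_pos (by omega : s < p), if_pos hlt] at hsc
      refine ⟨s, hs1', by omega, by omega, ?_⟩
      by_contra hcon
      push_neg at hcon
      apply hsc
      have hl1 := hL s hs1' (by omega)
      have hl2 := hL (s + 1) (by omega) (by omega)
      have hc1 := hconn s hs1' (by omega)
      have hc2 := hconn (s + 1) (by omega) hs2'
      refine ⟨Or.inr ⟨by linarith [hl1.1], hcon, hl2.2⟩, ?_, ?_⟩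
      · constructor
        · linarith [hl2.2, hl1.1, hij (s + 2) (by omega) (by omega)]
        · have := hc1.2.1.2; linarith [hl2.2]
      · exact h.mem (s + 1) (by omega) (by omega)
    · -- s + 1 = p : pair ([i_{p-1}, j_p], [i_{p+1}, j_{p+1}])
      rw [if_pos (by omega : s < p), if_neg (by omega : ¬ s + 1 < p)] at hsc
      rcases eq_or_lt_of_le hp2 with hpe | hplt
      · -- p = rr 1 : this pair is always connected, contradiction
        exfalso
        apply hsc
        have hc2 := hconn (s + 1) (by omega) hs2'
        have hr1 := hR (s + 1) (by omega) (by omega)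
        have hov : ii (s + 2) ≤ jj (s + 1) ∧ jj (s + 1) < jj (s + 2) :=
          hOv3 (s + 1) (by omega) (by omega)
        have hf3 : ii s < ii (s + 2) := by
          have := hF3
          rw [show rr 1 - 1 = s by omega, show rr 1 + 1 = s + 2 by omega] at this
          exact this
        have hl1 := hL s hs1' (by omega)
        refine ⟨Or.inl ⟨hf3, hov.1, hov.2⟩, ?_, ?_⟩
        · constructor
          · linarith [hij (s + 2) (by omega) (by omega)]
          · have := hc2.2.1.2; linarith [hl1.1]
        · exact hc2.2.2
      · -- p < rr 1 : failure forces j_{p+1} < i_{p-1}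
        refine ⟨s, hs1', by omega, by omega, ?_⟩
        by_contra hcon
        push_neg at hcon
        apply hsc
        have hl1 := hL s hs1' (by omega)
        have hl2 := hL (s + 1) (by omega) (by omega)
        have hc1 := hconn s hs1' (by omega)
        have hc2 := hconn (s + 1) (by omega) hs2'
        refine ⟨Or.inr ⟨by linarith [hl1.1, hl2.1], hcon, hl2.2⟩, ?_, ?_⟩
        · constructor
          · linarith [hij (s + 2) (by omega) (by omega), hl2.1, hl1.1]
          · have := hc1.2.1.2; linarith [hl2.2]
        · exact ⟨by linarith [(hc2.2.2).1], (hc2.2.2).2⟩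
    · -- s ≥ p : pair is an original pair, connected
      exfalso
      rw [if_neg (by omega : ¬ s < p), if_neg (by omega : ¬ s + 1 < p)] at hsc
      exact hsc (hconn (s + 1) (by omega) (by omega))
  obtain ⟨q, hq1, hq2, hq3, hq4⟩ := key
  -- the conclusion for indices in the first segment
  have hseg1 : ∀ s, q + 2 ≤ s → s ≤ rr 1 → jj s < ii q := by
    intro s ha hb
    have := (hLc (q + 2) s (by omega) ha hb).2
    linarith
  -- the conclusion for indices in the second segment, by strong induction
  have hseg2 : ∀ s, s ≤ rr 2 → rr 1 < s → jj s < ii q := by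
    intro s
    induction s using Nat.strong_induction_on with
    | _ s IH =>
      intro hs2 hs1
      obtain ⟨t, rfl⟩ : ∃ t, s = t + 1 := ⟨s - 1, by omega⟩
      have hjt : jj t < ii q := by
        rcases lt_or_eq_of_le (show rr 1 ≤ t by omega) with hlt | heq
        · exact IH t (by omega) (by omega) hlt
        · have := (hLc (q + 2) t (by omega) (by omega) (by omega)).2
          linarith
      have hits : ii (t + 1) ≤ jj t := (hOv3 t (by omega) (by omega)).1
      have hit : ii (t + 1) < ii q := by linarith
      by_contra hcon
      push_neg at hcon
      -- nonoverlap of q and t+1 forces jj q ≤ jj (t+1)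
      have hno := h.nonoverlap 1 q (t + 1) le_rfl (by omega) hq1 (by omega) hs1 (by omega)
      have hjq : jj q ≤ jj (t + 1) := by
        by_contra hjq
        push_neg at hjq
        exact hno (Or.inr ⟨hit, hcon, hjq⟩)
      -- find the minimal transition point q' = u + 1 in [q+1, rr 1] with ii q' < ii (t+1)
      have hex : ∃ q', q + 1 ≤ q' ∧ q' ≤ rr 1 ∧ ii q' < ii (t + 1) := by
        refine ⟨rr 1, by omega, le_rfl, ?_⟩
        have h1 := (hR (rr 1) le_rfl (by omega)).1
        have h2 := (hRc (rr 1 + 1) (t + 1) (by omega) (by omega) (by omega)).1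
        linarith
      obtain ⟨hu1, hu2, hu3⟩ := Nat.find_spec hex
      obtain ⟨u, hue⟩ : ∃ u, Nat.find hex = u + 1 := ⟨Nat.find hex - 1, by omega⟩
      rw [hue] at hu1 hu2 hu3
      have hiu : ii (t + 1) ≤ ii u := by
        rcases eq_or_lt_of_le (show q ≤ u by omega) with he | hlt
        · rw [← he]; exact le_of_lt hit
        · have hmin := Nat.find_min hex (show u < Nat.find hex by omega)
          push_neg at hmin
          have := hmin (by omega) (by omega)
          linarith
      rcases eq_or_lt_of_le hu2 with he | hlt
      · -- u + 1 = rr 1 : contradicts hF3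
        have hf : ii u < ii (u + 2) := by
          have := hF3
          rw [show rr 1 - 1 = u by omega, show rr 1 + 1 = u + 2 by omega] at this
          exact this
        have := (hRc (u + 2) (t + 1) (by omega) (by omega) (by omega)).1
        linarith
      · -- u + 1 < rr 1 : intervals u+1 and t+1 overlap, contradiction
        have hno2 := h.nonoverlap 1 (u + 1) (t + 1) le_rfl (by omega) (by omega) hlt hs1
          (by omega)
        apply hno2
        left
        refine ⟨hu3, ?_, ?_⟩
        · have := hOv2 u (by omega) (by omega)
          linarith
        · have h1 := (hLc (q + 1) (u + 1) (by omega) (by omega) (by omega)).2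
          have h2 := (hL q hq1 (by omega)).2
          linarith
  refine ⟨q, hq1, hq2, by omega, ?_⟩
  intro s ha hb
  rcases le_or_gt s (rr 1) with hc | hc
  · exact hseg1 s ha hc
  · exact hseg2 s hb hc

end AltSnakePaper
end

section
/- Let [i_1,j_1], [i_2,j_2] ∈ 𝕀_n with i_1 + j_1 > i_2 + j_2. Then [i_1,j_1] ∈ 𝒞⁻_{i_2,j_2} if and only if the pair ([i_1,j_1],[i_2,j_2]) is connected. -/
namespace AltSnakePaper

/-- A Mukhin–Young path `g ∈ ℙ_{i,j}`. -/
def MYPath (n : ℕ) (i j : ℤ) (g : ℕ → ℤ) : Prop :=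
  g 0 = 2 * j ∧ (∀ r : ℕ, r ≤ n → g (r + 1) - g r = 1 ∨ g (r + 1) - g r = -1) ∧
  g (n + 1) = (n : ℤ) + 1 + 2 * i

/-- `[x,y] ∈ 𝒞⁻_{i,j}`. -/
def CminusMem (n : ℕ) (i j : ℤ) (x y : ℤ) : Prop :=
  ∃ g : ℕ → ℤ, MYPath n i j g ∧ ∃ r : ℕ, 1 ≤ r ∧ r ≤ n ∧
    g (r - 1) = g r - 1 ∧ g (r + 1) = g r - 1 ∧ 2 * x = g r - (r : ℤ) ∧ 2 * y = g r + (r : ℤ)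


lemma path_bound {n : ℕ} {g : ℕ → ℤ}
    (hstep : ∀ r : ℕ, r ≤ n → g (r + 1) - g r = 1 ∨ g (r + 1) - g r = -1) :
    ∀ a b : ℕ, a ≤ b → b ≤ n + 1 → g b - g a ≤ (b : ℤ) - a ∧ g a - g b ≤ (b : ℤ) - a := by
  intro a b
  induction b with
  | zero => intro hab _; interval_cases a; simp
  | succ b ih =>
    intro hab hb
    rcases Nat.lt_or_ge a (b + 1) with h | h
    · have h1 := ih (by omega) (by omega)
      have hs := hstep b (by omega)
      push_cast
      omega
    · have : a = b + 1 := by omega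
      subst this
      simp

/-- Lemma (ellwttau): for `[i1,j1], [i2,j2] ∈ 𝕀ₙ` with `i1 + j1 > i2 + j2`,
`[i1,j1] ∈ 𝒞⁻_{i2,j2}` iff `([i1,j1],[i2,j2])` is connected. -/
theorem stmt_16 (n : ℕ) (hn : 1 ≤ n) (i1 j1 i2 j2 : ℤ)
    (h1 : InIn n i1 j1) (h2 : InIn n i2 j2) (hsum : i2 + j2 < i1 + j1) :
    CminusMem n i2 j2 i1 j1 ↔ ConnPair n i1 j1 i2 j2 := by
  constructor
  · rintro ⟨g, ⟨hg0, hstep, hgn⟩, r, hr1, hrn, hm1, hm2, hx, hy⟩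
    have hgr : g r = i1 + j1 := by omega
    have hrc : (r : ℤ) = j1 - i1 := by omega
    have B1 := path_bound hstep 0 (r - 1) (by omega) (by omega)
    have B2 := path_bound hstep (r + 1) (n + 1) (by omega) (by omega)
    have e1 : g (r - 1) = i1 + j1 - 1 := by omega
    have e2 : g (r + 1) = i1 + j1 - 1 := by omega
    have c1 : ((r - 1 : ℕ) : ℤ) = (r : ℤ) - 1 := by omega
    rw [hg0, e1, c1] at B1
    rw [hgn, e2] at B2
    push_cast at B2
    refine ⟨Or.inr ⟨by omega, by omega, by omega⟩, ⟨by omega, by omega⟩, ⟨by omega, by omega⟩⟩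
  · rintro ⟨hov, ⟨h12a, h12b⟩, ⟨h21a, h21b⟩⟩
    have hkey : i2 < i1 ∧ i1 ≤ j2 ∧ j2 < j1 := by
      rcases hov with h | h
      · omega
      · exact h
    obtain ⟨k1, k2, k3⟩ := hkey
    set g : ℕ → ℤ := fun s =>
      if (s : ℤ) ≤ j2 - i1 then 2 * j2 - s
      else if (s : ℤ) ≤ j1 - i1 then 2 * i1 + s
      else if (s : ℤ) ≤ j1 - i2 then 2 * j1 - s
      else 2 * i2 + s with hgdef
    have hg : ∀ s : ℕ, g s =
        if (s : ℤ) ≤ j2 - i1 then 2 * j2 - s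
        else if (s : ℤ) ≤ j1 - i1 then 2 * i1 + s
        else if (s : ℤ) ≤ j1 - i2 then 2 * j1 - s
        else 2 * i2 + s := fun s => rfl
    refine ⟨g, ⟨?_, ?_, ?_⟩, (j1 - i1).toNat, ?_, ?_, ?_, ?_, ?_, ?_⟩
    · rw [hg]; split_ifs <;> push_cast <;> omega
    · intro r hr
      rw [hg, hg]
      split_ifs <;> push_cast <;> omega
    · rw [hg]; split_ifs <;> push_cast <;> omega
    · omega
    · omega
    · rw [hg, hg]; split_ifs <;> push_cast <;> omega
    · rw [hg, hg]; split_ifs <;> push_cast <;> omega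
    · rw [hg]; split_ifs <;> push_cast <;> omega
    · rw [hg]; split_ifs <;> push_cast <;> omega


end AltSnakePaper
end
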